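/- Let X be a ultrauniform space equipped with a uniformly continuous action of a group G. Then the action has the weak specification property if and only if it satisfies the following two-piece condition (WSP'): for every entourage U of X there exists a finite subset Λ ⊂ G such that whenever Ω₁ and Ω₂ are finite subsets of G with Ω₁ ∩ ΛΩ₂ = ∅ and x₁, x₂ ∈ X, there exists x ∈ X with (x, x_k) ∈ U^(Ω_k) for k = 1, 2. -/

import Mathlib

open scoped Pointwise Uniformity

/-- `Λ` is a specification subset for the entourage `U`. -/
def IsSpecificationSubset (G X : Type*) [Group G] [SMul G X]
    (U : Set (X × X)) (Λ : Finset G) : Prop :=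
  ∀ (ι : Type) (_ : Finite ι) (_ : Nonempty ι) (Ω : ι → Finset G) (x : ι → X),
    (∀ j k : ι, j ≠ k → Disjoint ((Ω j : Set G)) ((Λ : Set G) * (Ω k : Set G))) →
    ∃ y : X, ∀ i : ι, ∀ g ∈ Ω i, (g • y, g • x i) ∈ U

/-- The weak specification property for the action of `G` on the uniform space `X`. -/
def WeakSpecification (G X : Type*) [Group G] [SMul G X] [UniformSpace X] : Prop :=
  ∀ U ∈ 𝓤 X, ∃ Λ : Finset G, IsSpecificationSubset G X U Λ

lemma aux_spec {G X : Type*} [Group G] [UniformSpace X] [MulAction G X]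
    (V : Set (X × X))
    (hVtrans : SetRel.comp V V ⊆ V) (Λ : Finset G)
    (hΛ : ∀ Ω₁ Ω₂ : Finset G, Disjoint (Ω₁ : Set G) ((Λ : Set G) * (Ω₂ : Set G)) →
      ∀ x₁ x₂ : X, ∃ x : X, (∀ g ∈ Ω₁, (g • x, g • x₁) ∈ V) ∧ (∀ g ∈ Ω₂, (g • x, g • x₂) ∈ V))
    (hX : Nonempty X) :
    ∀ (n : ℕ) (ι : Type) (_ : Fintype ι), Fintype.card ι = n →
      ∀ (Ω : ι → Finset G) (x : ι → X),
        (∀ j k : ι, j ≠ k → Disjoint ((Ω j : Set G)) ((Λ : Set G) * (Ω k : Set G))) →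
        ∃ y : X, ∀ i : ι, ∀ g ∈ Ω i, (g • y, g • x i) ∈ V := by
  intro n
  induction n with
  | zero =>
    intro ι _ hcard Ω x _
    refine ⟨hX.some, fun i => ?_⟩
    have : IsEmpty ι := Fintype.card_eq_zero_iff.mp hcard
    exact this.elim i
  | succ n ih =>
    intro ι _ hcard Ω x hdisj
    have hne : Nonempty ι := Fintype.card_pos_iff.mp (by omega)
    obtain ⟨i₀⟩ := hne
    haveI := Classical.decEq ι
    haveI := Classical.decEq G
    set ι' := {i : ι // i ≠ i₀}
    have hcard' : Fintype.card ι' = n := by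
      have h1 := Fintype.card_subtype_compl (fun i : ι => i = i₀)
      rw [Fintype.card_subtype_eq, hcard] at h1
      have h2 : Fintype.card ι' = Fintype.card {i : ι // ¬ i = i₀} :=
        Fintype.card_congr (Equiv.subtypeEquivRight (fun _ => Iff.rfl))
      omega
    obtain ⟨y, hy⟩ := ih ι' inferInstance hcard' (fun i => Ω i.1) (fun i => x i.1)
      (fun j k hjk => hdisj j.1 k.1 (fun h => hjk (Subtype.ext h)))
    set Ω₁ : Finset G := Finset.univ.biUnion (fun i : ι' => Ω i.1) with hΩ₁
    have hd1 : Disjoint (Ω₁ : Set G) ((Λ : Set G) * (Ω i₀ : Set G)) := by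
      rw [hΩ₁, Finset.coe_biUnion]
      simp only [Set.disjoint_iUnion_left]
      intro i _
      exact hdisj i.1 i₀ i.2
    obtain ⟨z, hz1, hz2⟩ := hΛ Ω₁ (Ω i₀) hd1 y (x i₀)
    refine ⟨z, fun i g hg => ?_⟩
    by_cases h : i = i₀
    · subst h; exact hz2 g hg
    · have hgΩ₁ : g ∈ Ω₁ := Finset.mem_biUnion.mpr ⟨⟨i, h⟩, Finset.mem_univ _, hg⟩
      exact hVtrans ⟨g • y, hz1 g hgΩ₁, hy ⟨i, h⟩ g hg⟩

theorem weakSpecification_iff_two_pieces {G X : Type*} [Group G]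
    [UniformSpace X] [MulAction G X]
    (hcont : ∀ g : G, UniformContinuous fun x : X => g • x)
    (hultra : ∀ U ∈ 𝓤 X, ∃ V ∈ 𝓤 X, V ⊆ U ∧ (∀ p : X × X, p ∈ V → p.swap ∈ V) ∧
      SetRel.comp V V ⊆ V) :
    WeakSpecification G X ↔
      ∀ U ∈ 𝓤 X, ∃ Λ : Finset G, ∀ Ω₁ Ω₂ : Finset G,
        Disjoint (Ω₁ : Set G) ((Λ : Set G) * (Ω₂ : Set G)) →
        ∀ x₁ x₂ : X, ∃ x : X,
          (∀ g ∈ Ω₁, (g • x, g • x₁) ∈ U) ∧ (∀ g ∈ Ω₂, (g • x, g • x₂) ∈ U) := by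
  constructor
  · -- WSP → WSP'
    intro hWS U hU
    obtain ⟨Λ, hΛ⟩ := hWS U hU
    haveI := Classical.decEq G
    refine ⟨Λ ∪ Λ.image (·⁻¹), ?_⟩
    intro Ω₁ Ω₂ hd x₁ x₂
    set Λ' := Λ ∪ Λ.image (·⁻¹) with hΛ'def
    have hsym : ∀ l ∈ Λ', l⁻¹ ∈ Λ' := by
      intro l hl
      simp only [hΛ'def, Finset.mem_union, Finset.mem_image] at hl ⊢
      rcases hl with h | ⟨a, ha, rfl⟩
      · exact Or.inr ⟨l, h, rfl⟩
      · exact Or.inl (by simpa using ha)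
    have hΛsub : (Λ : Set G) ⊆ (Λ' : Set G) := by
      intro a ha
      simp only [hΛ'def, Finset.coe_union, Set.mem_union]
      exact Or.inl ha
    have hd21 : Disjoint (Ω₂ : Set G) ((Λ' : Set G) * (Ω₁ : Set G)) := by
      rw [Set.disjoint_left]
      intro a ha2 hmem
      obtain ⟨l, hl, b, hb, rfl⟩ := Set.mem_mul.mp hmem
      have : b ∈ (Λ' : Set G) * (Ω₂ : Set G) := by
        refine Set.mem_mul.mpr ⟨l⁻¹, hsym l hl, l * b, ha2, by group⟩
      exact Set.disjoint_left.mp hd hb this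
    have hd12 : Disjoint (Ω₁ : Set G) ((Λ : Set G) * (Ω₂ : Set G)) :=
      hd.mono_right (Set.mul_subset_mul_right hΛsub)
    have hd21' : Disjoint (Ω₂ : Set G) ((Λ : Set G) * (Ω₁ : Set G)) :=
      hd21.mono_right (Set.mul_subset_mul_right hΛsub)
    obtain ⟨y, hy⟩ := hΛ Bool inferInstance inferInstance
      (fun b => if b then Ω₁ else Ω₂) (fun b => if b then x₁ else x₂)
      (by
        intro j k hjk
        match j, k with
        | true, false => simpa using hd12
        | false, true => simpa using hd21'
        | true, true => exact absurd rfl hjk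
        | false, false => exact absurd rfl hjk)
    refine ⟨y, fun g hg => by simpa using hy true g (by simpa using hg),
      fun g hg => by simpa using hy false g (by simpa using hg)⟩
  · -- WSP' → WSP
    intro h2 U hU
    obtain ⟨V, hV, hVU, _hVsym, hVtrans⟩ := hultra U hU
    obtain ⟨Λ, hΛ⟩ := h2 V hV
    refine ⟨Λ, ?_⟩
    intro ι hfin hne Ω x hdisj
    haveI : Fintype ι := Fintype.ofFinite ι
    have hX : Nonempty X := ⟨x hne.some⟩
    obtain ⟨y, hy⟩ := aux_spec V hVtrans Λ hΛ hX (Fintype.card ι) ι inferInstance rfl Ω x hdisj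
    exact ⟨y, fun i g hg => hVU (hy i g hg)⟩
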